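/- Let L, U, Ψ, C be positive real numbers with 2ΨU > L, let p(y) = (L/(2Ψ))·(2ΨU/L)^(y/C), and let α be a real number with α ≥ ln(2ΨU/L) and α > 0. Then for every y ∈ [0, C], the Differential Allocation-Payment Relationship holds with zero marginal cost and conjugate derivative C: p(y) ≥ (1/α)·C·(deriv p y); equivalently α·p(y) ≥ C·p(y)·ln(2ΨU/L)/C, with equality when α = ln(2ΨU/L). -/

import Mathlib

/-- The Differential Allocation-Payment Relationship for the
exponential dual update with zero marginal cost and conjugate derivative `C`:
`p(y) ≥ (1/α)·C·(deriv p y)` on `[0, C]`, with equality when `α = ln(2ΨU/L)`. -/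
theorem dual_update_allocation_payment
    (L U Ψ C : ℝ) (hL : 0 < L) (hU : 0 < U) (hΨ : 0 < Ψ) (hC : 0 < C)
    (hUL : 2 * Ψ * U > L)
    (p : ℝ → ℝ)
    (hp : ∀ y, p y = (L / (2 * Ψ)) * (2 * Ψ * U / L) ^ (y / C))
    (α : ℝ) (hα : α ≥ Real.log (2 * Ψ * U / L)) (hα0 : 0 < α) :
    ∀ y ∈ Set.Icc (0 : ℝ) C,
      p y ≥ (1 / α) * C * deriv p y ∧
      (α = Real.log (2 * Ψ * U / L) → p y = (1 / α) * C * deriv p y) := by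
  intro y hy
  set b : ℝ := 2 * Ψ * U / L with hb
  have hb1 : 1 < b := (one_lt_div hL).2 hUL
  have hb0 : 0 < b := lt_trans one_pos hb1
  have hd : HasDerivAt p ((L / (2 * Ψ)) * (b ^ (y / C) * Real.log b / C)) y := by
    have h1 : HasDerivAt (fun x : ℝ => x / C) (1 / C) y := (hasDerivAt_id y).div_const C
    have h2 : HasDerivAt (fun x : ℝ => b ^ (x / C))
        (0 * (y / C) * b ^ (y / C - 1) + (1 / C) * b ^ (y / C) * Real.log b) y :=
      (hasDerivAt_const y b).rpow h1 hb0
    have h3 := h2.const_mul (L / (2 * Ψ))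
    have : p = fun x : ℝ => (L / (2 * Ψ)) * b ^ (x / C) := funext hp
    rw [this]
    refine h3.congr_deriv ?_
    ring
  have hderiv : deriv p y = (L / (2 * Ψ)) * (b ^ (y / C) * Real.log b / C) := hd.deriv
  have hpy : p y = (L / (2 * Ψ)) * b ^ (y / C) := hp y
  have hppos : 0 < p y := by
    rw [hpy]
    positivity
  have hkey : (1 / α) * C * deriv p y = p y * (Real.log b / α) := by
    rw [hderiv, hpy]; field_simp
  constructor
  · rw [hkey]
    have hlog : Real.log b / α ≤ 1 := by
      rw [div_le_one hα0]; exact hα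
    nlinarith
  · intro he
    rw [hkey, ← he, div_self (ne_of_gt hα0), mul_one]
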